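/- Let p be an odd prime, v ∈ ℚ_p a p-adic unit that is not a square in ℚ_p, A = diag(1, -v, p), and SO(3)_p = {L ∈ M₃(ℚ_p) : LᵀAL = A, det L = 1}. Let e₁, e₂, e₃ be the standard basis vectors of ℚ_p³. Then there exists M ∈ SO(3)_p which admits no Euler decomposition of the form x–y–x: there do not exist X, Y, X' ∈ SO(3)_p with X e₁ = e₁, Y e₂ = e₂, X' e₁ = e₁ and M = X·Y·X'. -/

import Mathlib

open Matrix

private theorem aux_norm_two (p : ℕ) [hF : Fact p.Prime] (hp : p ≠ 2) :
    ‖(2 : ℚ_[p])‖ = 1 := by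
  have h2 : ¬ ((p:ℤ) ∣ 2) := by
    intro h
    have := Int.le_of_dvd (by norm_num) h
    have hp2 := hF.out.two_le
    omega
  have hlt := (Padic.norm_intCast_lt_one_iff (p := p) (k := 2)).not.mpr h2
  have hle := Padic.norm_int_le_one (p := p) 2
  push_neg at hlt
  have : ‖((2:ℤ) : ℚ_[p])‖ = 1 := le_antisymm hle hlt
  simpa using this

private theorem aux_sq (p : ℕ) [hF : Fact p.Prime] (hp : p ≠ 2) (v : ℚ_[p]) (hv : ‖v‖ = 1)
    (h : ‖1 - v‖ < 1) : IsSquare v := by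
  have h2q : ‖(2 : ℚ_[p])‖ = 1 := aux_norm_two p hp
  set w : ℤ_[p] := ⟨v, by rw [hv]⟩ with hw
  have h2 : ‖(2 : ℤ_[p])‖ = 1 := by rw [PadicInt.norm_def]; exact_mod_cast h2q
  have key : ‖(Polynomial.X^2 - Polynomial.C w : Polynomial ℤ_[p]).eval 1‖ <
      ‖(Polynomial.X^2 - Polynomial.C w : Polynomial ℤ_[p]).derivative.eval 1‖ ^ 2 := by
    have e1 : (Polynomial.X^2 - Polynomial.C w : Polynomial ℤ_[p]).eval 1 = 1 - w := by simp
    have e2 : (Polynomial.X^2 - Polynomial.C w : Polynomial ℤ_[p]).derivative.eval 1 = 2 := by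
      simp [Polynomial.derivative_sub, Polynomial.derivative_pow]
    rw [e1, e2, h2, one_pow, PadicInt.norm_def]
    exact_mod_cast h
  obtain ⟨z, hz, -⟩ := hensels_lemma key
  refine ⟨(z : ℚ_[p]), ?_⟩
  have hz2 : z^2 = w := by simpa [sub_eq_zero] using hz
  have : ((z^2 : ℤ_[p]) : ℚ_[p]) = v := by rw [hz2]
  push_cast at this
  rw [← this]; ring

private theorem aux_mem (p : ℕ) [hF : Fact p.Prime] (v : ℚ_[p])
    (A : Matrix (Fin 3) (Fin 3) ℚ_[p]) (hA : A = Matrix.diagonal ![1, -v, (p : ℚ_[p])])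
    (a c : ℚ_[p]) (hac : a^2 - v*c^2 = 1) :
    (!![a, v*c, 0; c, a, 0; 0, 0, 1])ᵀ * A * !![a, v*c, 0; c, a, 0; 0, 0, 1] = A ∧
      (!![a, v*c, 0; c, a, 0; 0, 0, 1] : Matrix (Fin 3) (Fin 3) ℚ_[p]).det = 1 := by
  have hT : (!![a, v*c, 0; c, a, 0; 0, 0, 1] : Matrix (Fin 3) (Fin 3) ℚ_[p])ᵀ
      = !![a, c, 0; v*c, a, 0; 0, 0, 1] := by
    ext i j; fin_cases i <;> fin_cases j <;> rfl
  have hA2 : A = !![1, 0, 0; 0, -v, 0; 0, 0, (p:ℚ_[p])] := by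
    rw [hA]; ext i j
    fin_cases i <;> fin_cases j <;> simp [Matrix.diagonal, Matrix.vecHead, Matrix.vecTail]
  constructor
  · rw [hT, hA2]
    ext i j
    fin_cases i <;> fin_cases j <;>
      simp [Matrix.mul_apply, Fin.sum_univ_three, Matrix.vecHead, Matrix.vecTail] <;>
      first
        | linear_combination hac
        | linear_combination v * hac
        | linear_combination (-v) * hac
        | ring
  · rw [Matrix.det_fin_three]
    simp only [Matrix.cons_val', Matrix.cons_val_zero, Matrix.cons_val_one, Matrix.head_cons,
      Matrix.empty_val', Matrix.cons_val_fin_one, Matrix.head_fin_const, Matrix.of_apply,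
      Matrix.cons_val_two, Matrix.tail_cons]
    linear_combination hac

private theorem aux_y (p : ℕ) [hF : Fact p.Prime] (v : ℚ_[p]) (hv0 : v ≠ 0)
    (A : Matrix (Fin 3) (Fin 3) ℚ_[p]) (hA : A = Matrix.diagonal ![1, -v, (p : ℚ_[p])])
    (Y : Matrix (Fin 3) (Fin 3) ℚ_[p]) (hY : Yᵀ * A * Y = A)
    (hYe : Y.mulVec (Pi.single 1 1) = Pi.single 1 1) :
    Y 0 0 ^ 2 + p * (Y 2 0)^2 = 1 := by
  have hcol : ∀ i, Y i 1 = (Pi.single 1 1 : Fin 3 → ℚ_[p]) i := by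
    intro i
    have := congrFun hYe i
    simpa [Matrix.mulVec_single] using this
  have hc0 : Y 0 1 = 0 := by simpa using hcol 0
  have hc1 : Y 1 1 = 1 := by simpa using hcol 1
  have hc2 : Y 2 1 = 0 := by simpa using hcol 2
  have hA2 : A = !![1, 0, 0; 0, -v, 0; 0, 0, (p:ℚ_[p])] := by
    rw [hA]; ext i j
    fin_cases i <;> fin_cases j <;> simp [Matrix.diagonal, Matrix.vecHead, Matrix.vecTail]
  rw [hA2] at hY
  have h10 : Y 1 0 = 0 := by
    have := congrFun (congrFun hY 0) 1
    simp [Matrix.mul_apply, Fin.sum_univ_three, Matrix.transpose_apply, hc0, hc1, hc2,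
      Matrix.vecHead, Matrix.vecTail] at this
    exact this.resolve_right hv0
  have h00 := congrFun (congrFun hY 0) 0
  simp [Matrix.mul_apply, Fin.sum_univ_three, Matrix.transpose_apply, h10,
    Matrix.vecHead, Matrix.vecTail] at h00
  linear_combination h00

private theorem aux_xrow (p : ℕ) [hF : Fact p.Prime] (v : ℚ_[p])
    (A : Matrix (Fin 3) (Fin 3) ℚ_[p]) (hA : A = Matrix.diagonal ![1, -v, (p : ℚ_[p])])
    (X : Matrix (Fin 3) (Fin 3) ℚ_[p]) (hX : Xᵀ * A * X = A)
    (hXe : X.mulVec (Pi.single 0 1) = Pi.single 0 1) :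
    ∀ i, X 0 i = (Pi.single 0 1 : Fin 3 → ℚ_[p]) i := by
  have hcol : ∀ i, X i 0 = (Pi.single 0 1 : Fin 3 → ℚ_[p]) i := by
    intro i
    have := congrFun hXe i
    simpa [Matrix.mulVec_single] using this
  have hc0 : X 0 0 = 1 := by simpa using hcol 0
  have hc1 : X 1 0 = 0 := by simpa using hcol 1
  have hc2 : X 2 0 = 0 := by simpa using hcol 2
  have hA2 : A = !![1, 0, 0; 0, -v, 0; 0, 0, (p:ℚ_[p])] := by
    rw [hA]; ext i j
    fin_cases i <;> fin_cases j <;> simp [Matrix.diagonal, Matrix.vecHead, Matrix.vecTail]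
  rw [hA2] at hX
  intro i
  have h := congrFun (congrFun hX i) 0
  simp [Matrix.mul_apply, Fin.sum_univ_three, Matrix.transpose_apply, hc0, hc1, hc2,
    Matrix.vecHead, Matrix.vecTail] at h
  fin_cases i <;>
    simp_all [Matrix.mul_apply, Fin.sum_univ_three, Matrix.transpose_apply,
      Matrix.vecHead, Matrix.vecTail]

/-- For any odd prime `p`, there is an `M ∈ SO(3)_p` that admits
no Euler decomposition of the form x–y–x. -/
theorem no_xyx_euler_odd
    (p : ℕ) [Fact p.Prime] (hp : p ≠ 2)
    (v : ℚ_[p]) (hv : ‖v‖ = 1) (hvsq : ¬ IsSquare v)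
    (A : Matrix (Fin 3) (Fin 3) ℚ_[p])
    (hA : A = Matrix.diagonal ![1, -v, (p : ℚ_[p])])
    (SO3 : Set (Matrix (Fin 3) (Fin 3) ℚ_[p]))
    (hSO3 : SO3 = {L | Lᵀ * A * L = A ∧ L.det = 1})
    (e : Fin 3 → (Fin 3 → ℚ_[p])) (he : ∀ i, e i = Pi.single i 1) :
    ∃ M ∈ SO3, ¬ ∃ X Y X', X ∈ SO3 ∧ Y ∈ SO3 ∧ X' ∈ SO3 ∧
      X.mulVec (e 0) = e 0 ∧ Y.mulVec (e 1) = e 1 ∧ X'.mulVec (e 0) = e 0 ∧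
      M = X * Y * X' := by
  have hF : Fact p.Prime := inferInstance
  have hv0 : v ≠ 0 := by intro h; rw [h] at hv; simp at hv
  have h1v : ‖1 - v‖ = 1 := by
    have hle : ‖1 - v‖ ≤ 1 := by
      have := Padic.nonarchimedean (1 : ℚ_[p]) (-v)
      simpa [hv, sub_eq_add_neg] using this
    rcases lt_or_eq_of_le hle with h | h
    · exact absurd (aux_sq p hp v hv h) hvsq
    · exact h
  have h1v0 : (1:ℚ_[p]) - v ≠ 0 := by
    intro h; rw [h] at h1v; simp at h1v
  set a : ℚ_[p] := (1+v)/(1-v) with ha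
  set c : ℚ_[p] := 2/(1-v) with hc
  have hac : a^2 - v*c^2 = 1 := by
    rw [ha, hc]; field_simp; ring
  set M : Matrix (Fin 3) (Fin 3) ℚ_[p] := !![a, v*c, 0; c, a, 0; 0, 0, 1] with hM
  refine ⟨M, ?_, ?_⟩
  · rw [hSO3]
    exact aux_mem p v A hA a c hac
  · rintro ⟨X, Y, X', hX, hY, hX', hXe, hYe, hX'e, hMd⟩
    rw [hSO3] at hX hY hX'
    rw [he 0] at hXe hX'e
    rw [he 1] at hYe
    -- row facts
    have hXrow := aux_xrow p v A hA X hX.1 hXe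
    have hX'col : ∀ i, X' i 0 = (Pi.single 0 1 : Fin 3 → ℚ_[p]) i := by
      intro i
      have := congrFun hX'e i
      simpa [Matrix.mulVec_single] using this
    -- M 0 0 = Y 0 0
    have hM00 : M 0 0 = Y 0 0 := by
      rw [hMd]
      have h0 := hXrow 0
      have h1 := hXrow 1
      have h2 := hXrow 2
      have g0 := hX'col 0
      have g1 := hX'col 1
      have g2 := hX'col 2
      simp at h0 h1 h2 g0 g1 g2
      simp [Matrix.mul_apply, Fin.sum_univ_three, h0, h1, h2, g0, g1, g2]
    have hMa : M 0 0 = a := by simp [hM]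
    -- obstruction equation
    have hkey : Y 0 0 ^ 2 + p * (Y 2 0)^2 = 1 := aux_y p v hv0 A hA Y hY.1 hYe
    set z : ℚ_[p] := Y 2 0 with hz
    have haz : a^2 - 1 = -(p : ℚ_[p]) * z^2 := by
      rw [← hMa, hM00]; linear_combination hkey
    have ha2 : a^2 - 1 = (2^2*v)/((1-v)^2) := by
      rw [ha]; field_simp; ring
    have hz0 : z ≠ 0 := by
      intro h
      have h4 : (2^2*v)/((1-v)^2) = (0:ℚ_[p]) := by
        rw [← ha2, haz, h]; ring
      rw [div_eq_zero_iff] at h4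
      rcases h4 with h4 | h4
      · have : v = 0 := by
          field_simp at h4
          try exact h4
          exact (mul_eq_zero.mp h4).resolve_left (by norm_num)
        exact hv0 this
      · exact h1v0 (pow_eq_zero_iff (n := 2) (by norm_num) |>.mp h4)
    have hnorm1 : ‖a^2 - 1‖ = 1 := by
      rw [ha2, norm_div, norm_mul, norm_pow, norm_pow, aux_norm_two p hp, hv, h1v]
      norm_num
    have hnorm2 : (1:ℝ) = ‖(p:ℚ_[p])‖ * ‖z‖^2 := by
      rw [← hnorm1, haz]
      rw [norm_mul, norm_pow]
      simp
    -- parity contradiction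
    have hp1 : (1:ℝ) < p := by exact_mod_cast hF.out.one_lt
    rw [Padic.norm_p, Padic.norm_eq_zpow_neg_valuation hz0] at hnorm2
    have hpow : (p:ℝ) ^ (0:ℤ) = (p:ℝ) ^ (-1 + (-z.valuation) * 2) := by
      rw [zpow_add₀ (by positivity), _root_.zpow_mul]
      simpa [_root_.zpow_neg] using hnorm2
    have := zpow_right_inj₀ (by positivity : (0:ℝ) < p) (by linarith : (p:ℝ) ≠ 1) |>.mp hpow
    omega
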